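/- If G is an M*₂,₂-circuit and G' is obtained from G by a 1-extension (delete an edge xy of G, add a new vertex v and three new edges vx, vy, vz for some vertex z of G distinct from x and y), then G' is an M*₂,₂-circuit. -/

import Mathlib

open scoped Classical

/-- The set of vertices incident to some edge in `F`. -/
def edgeVerts {V : Type*} (F : Set (Sym2 V)) : Set V := {v | ∃ e ∈ F, v ∈ e}

/-- Independence in the simple (2,2)-sparse matroid. -/
def Sparse22 {V : Type*} (F : Set (Sym2 V)) : Prop :=
  ∀ F' ⊆ F, F'.Nonempty →
    ((F'.ncard : ℤ) ≤ 2 * (edgeVerts F').ncard - 2 ∧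
      (F'.ncard = 2 → (F'.ncard : ℤ) < 2 * (edgeVerts F').ncard - 2))

/-- `G` is an `M*₂,₂`-circuit. -/
def M22Circuit {V : Type*} [Fintype V] (G : SimpleGraph V) : Prop :=
  (G.edgeSet.ncard : ℤ) = 2 * Fintype.card V - 1 ∧
  (∀ F ⊂ G.edgeSet, Sparse22 F) ∧
  ¬ Sparse22 G.edgeSet
set_option linter.unusedSectionVars false
namespace OneExtAux

variable {V W : Type*} [Finite V]

lemma edgeVerts_mono {A B : Set (Sym2 V)} (h : A ⊆ B) : edgeVerts A ⊆ edgeVerts B := by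
  rintro v ⟨e, he, hv⟩; exact ⟨e, h he, hv⟩

lemma edgeVerts_union (A B : Set (Sym2 V)) :
    edgeVerts (A ∪ B) = edgeVerts A ∪ edgeVerts B := by
  ext v; simp only [edgeVerts, Set.mem_union, Set.mem_setOf_eq]
  constructor
  · rintro ⟨e, he | he, hv⟩
    · exact Or.inl ⟨e, he, hv⟩
    · exact Or.inr ⟨e, he, hv⟩
  · rintro (⟨e, he, hv⟩ | ⟨e, he, hv⟩)
    · exact ⟨e, Or.inl he, hv⟩
    · exact ⟨e, Or.inr he, hv⟩

@[simp] lemma edgeVerts_empty : edgeVerts (∅ : Set (Sym2 V)) = ∅ := by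
  ext v; simp [edgeVerts]

lemma edgeVerts_map (f : V → W) (F : Set (Sym2 V)) :
    edgeVerts (Sym2.map f '' F) = f '' edgeVerts F := by
  ext v
  simp only [edgeVerts, Set.mem_image, Set.mem_setOf_eq]
  constructor
  · rintro ⟨e, ⟨e₀, he₀, rfl⟩, hv⟩
    rw [Sym2.mem_map] at hv
    obtain ⟨a, ha, rfl⟩ := hv
    exact ⟨a, ⟨e₀, he₀, ha⟩, rfl⟩
  · rintro ⟨a, ⟨e₀, he₀, ha⟩, rfl⟩
    exact ⟨Sym2.map f e₀, ⟨e₀, he₀, rfl⟩, Sym2.mem_map.mpr ⟨a, ha, rfl⟩⟩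

lemma edgeVerts_pair (a b : V) : edgeVerts ({s(a,b)} : Set (Sym2 V)) = {a, b} := by
  ext v; simp [edgeVerts, Sym2.mem_iff]

lemma three_le_aux (a b c d : V) (hab : a ≠ b) (hcd : c ≠ d)
    (hne : s(a,b) ≠ s(c,d)) : 3 ≤ (edgeVerts ({s(a,b), s(c,d)} : Set (Sym2 V))).ncard := by
  have hev : edgeVerts ({s(a,b), s(c,d)} : Set (Sym2 V)) = {a, b} ∪ {c, d} := by
    rw [show ({s(a,b), s(c,d)} : Set (Sym2 V)) = {s(a,b)} ∪ {s(c,d)} by rfl,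
      edgeVerts_union, edgeVerts_pair, edgeVerts_pair]
  by_cases hc : c = a ∨ c = b
  · have hd : d ≠ a ∧ d ≠ b := by
      constructor <;> rintro rfl
      · rcases hc with rfl | rfl
        · exact hcd rfl
        · exact hne (by rw [Sym2.eq_swap])
      · rcases hc with rfl | rfl
        · exact hne rfl
        · exact hcd rfl
    have hsub : ({a, b, d} : Set V) ⊆ edgeVerts ({s(a,b), s(c,d)} : Set (Sym2 V)) := by
      rw [hev]; intro v hv
      rcases hv with rfl | rfl | rfl
      · exact Or.inl (Or.inl rfl)
      · exact Or.inl (Or.inr rfl)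
      · exact Or.inr (Or.inr rfl)
    calc 3 = ({a, b, d} : Set V).ncard := by
            rw [Set.ncard_insert_of_notMem (by simp [hab, hd.1.symm]),
              Set.ncard_insert_of_notMem (by simp [hd.2.symm]), Set.ncard_singleton]
      _ ≤ _ := Set.ncard_le_ncard hsub (Set.toFinite _)
  · push_neg at hc
    have hsub : ({a, b, c} : Set V) ⊆ edgeVerts ({s(a,b), s(c,d)} : Set (Sym2 V)) := by
      rw [hev]; intro v hv
      rcases hv with rfl | rfl | rfl
      · exact Or.inl (Or.inl rfl)
      · exact Or.inl (Or.inr rfl)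
      · exact Or.inr (Or.inl rfl)
    calc 3 = ({a, b, c} : Set V).ncard := by
            rw [Set.ncard_insert_of_notMem (by simp [hab, hc.1.symm]),
              Set.ncard_insert_of_notMem (by simp [hc.2.symm]), Set.ncard_singleton]
      _ ≤ _ := Set.ncard_le_ncard hsub (Set.toFinite _)

lemma three_le {F : Set (Sym2 V)} (hd : ∀ e ∈ F, ¬ e.IsDiag) (h2 : F.ncard = 2) :
    3 ≤ (edgeVerts F).ncard := by
  obtain ⟨e, f, hef, rfl⟩ := Set.ncard_eq_two.mp h2
  revert hef hd
  induction e using Sym2.ind with | _ a b =>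
  induction f using Sym2.ind with | _ c d =>
  intro hef hd
  have hab : a ≠ b := fun h => hd s(a,b) (Or.inl rfl) (Sym2.mk_isDiag_iff.mpr h)
  have hcd : c ≠ d := fun h => hd s(c,d) (Or.inr rfl) (Sym2.mk_isDiag_iff.mpr h)
  exact three_le_aux a b c d hab hcd hef

end OneExtAux
open OneExtAux
theorem oneExtension_m22Circuit {V : Type} [Fintype V] (G : SimpleGraph V)
    (G' : SimpleGraph (Option V)) (x y z : V)
    (hxy : G.Adj x y) (hzx : z ≠ x) (hzy : z ≠ y)
    (hadj : ∀ u w : V, G'.Adj (some u) (some w) ↔ (G.Adj u w ∧ s(u, w) ≠ s(x, y)))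
    (hnew : ∀ u : V, G'.Adj none (some u) ↔ (u = x ∨ u = y ∨ u = z))
    (hG : M22Circuit G) : M22Circuit G' := by
  classical
  obtain ⟨hcard, hsparse, -⟩ := hG
  have hxny : x ≠ y := G.ne_of_adj hxy
  set n := Fintype.card V with hn
  set m : Sym2 V → Sym2 (Option V) := Sym2.map some with hm
  have hminj : Function.Injective m := Sym2.map.injective (Option.some_injective V)
  set e₁ : Sym2 (Option V) := s(none, some x) with he₁
  set e₂ : Sym2 (Option V) := s(none, some y) with he₂
  set e₃ : Sym2 (Option V) := s(none, some z) with he₃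
  have hnonem : ∀ e₀ : Sym2 V, (none : Option V) ∉ m e₀ := by
    intro e₀ h
    rw [hm, Sym2.mem_map] at h
    obtain ⟨a, -, ha⟩ := h
    exact Option.some_ne_none a ha
  -- characterization of the edge set of G'
  have hE : G'.edgeSet = m '' (G.edgeSet \ {s(x,y)}) ∪ {e₁, e₂, e₃} := by
    ext e
    induction e using Sym2.ind with | _ a b =>
    constructor
    · intro he
      rw [SimpleGraph.mem_edgeSet] at he
      match a, b with
      | none, none => exact absurd he G'.irrefl
      | none, some u =>
        rcases (hnew u).mp he with rfl | rfl | rfl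
        · exact Or.inr (Or.inl rfl)
        · exact Or.inr (Or.inr (Or.inl rfl))
        · exact Or.inr (Or.inr (Or.inr rfl))
      | some u, none =>
        rcases (hnew u).mp he.symm with rfl | rfl | rfl
        · exact Or.inr (Or.inl (Sym2.eq_swap))
        · exact Or.inr (Or.inr (Or.inl Sym2.eq_swap))
        · exact Or.inr (Or.inr (Or.inr Sym2.eq_swap))
      | some u, some w =>
        obtain ⟨hGa, hne⟩ := (hadj u w).mp he
        exact Or.inl ⟨s(u,w), ⟨hGa, hne⟩, by rw [hm, Sym2.map_pair_eq]⟩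
    · intro he
      rcases he with ⟨e₀, ⟨he₀, hne₀⟩, heq⟩ | he
      · rw [← heq]
        revert he₀ hne₀
        clear heq
        induction e₀ using Sym2.ind with | _ u w =>
        intro he₀ hne₀
        rw [hm, Sym2.map_pair_eq, SimpleGraph.mem_edgeSet]
        exact (hadj u w).mpr ⟨he₀, hne₀⟩
      · have h1 : G'.Adj none (some x) := (hnew x).mpr (Or.inl rfl)
        have h2 : G'.Adj none (some y) := (hnew y).mpr (Or.inr (Or.inl rfl))
        have h3 : G'.Adj none (some z) := (hnew z).mpr (Or.inr (Or.inr rfl))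
        rcases he with h | h | h <;> rw [h] <;>
          [rw [he₁]; rw [he₂]; rw [he₃]] <;> rw [SimpleGraph.mem_edgeSet] <;> assumption
  have hxyE : s(x,y) ∈ G.edgeSet := hxy
  -- distinctness of the new edges
  have h12 : e₁ ≠ e₂ := by
    intro h
    rw [he₁, he₂, Sym2.eq_iff] at h
    rcases h with ⟨-, h⟩ | ⟨h, -⟩
    · exact hxny (Option.some_injective V h)
    · exact Option.some_ne_none _ h.symm
  have h13 : e₁ ≠ e₃ := by
    intro h
    rw [he₁, he₃, Sym2.eq_iff] at h
    rcases h with ⟨-, h⟩ | ⟨h, -⟩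
    · exact hzx (Option.some_injective V h).symm
    · exact Option.some_ne_none _ h.symm
  have h23 : e₂ ≠ e₃ := by
    intro h
    rw [he₂, he₃, Sym2.eq_iff] at h
    rcases h with ⟨-, h⟩ | ⟨h, -⟩
    · exact hzy (Option.some_injective V h).symm
    · exact Option.some_ne_none _ h.symm
  have hnone1 : (none : Option V) ∈ e₁ := by rw [he₁]; exact Sym2.mem_mk_left _ _
  have hnone2 : (none : Option V) ∈ e₂ := by rw [he₂]; exact Sym2.mem_mk_left _ _
  have hnone3 : (none : Option V) ∈ e₃ := by rw [he₃]; exact Sym2.mem_mk_left _ _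
  have hdisj : Disjoint (m '' (G.edgeSet \ {s(x,y)})) ({e₁, e₂, e₃} : Set (Sym2 (Option V))) := by
    rw [Set.disjoint_right]
    rintro e (rfl | rfl | rfl) ⟨e₀, -, he₀⟩
    · exact hnonem e₀ (by rw [he₀]; exact hnone1)
    · exact hnonem e₀ (by rw [he₀]; exact hnone2)
    · exact hnonem e₀ (by rw [he₀]; exact hnone3)
  have hc3 : ({e₁, e₂, e₃} : Set (Sym2 (Option V))).ncard = 3 := by
    rw [Set.ncard_insert_of_notMem (by simp [h12, h13]) (Set.toFinite _),
      Set.ncard_insert_of_notMem (by simp [h23]) (Set.toFinite _), Set.ncard_singleton]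
  have hcE' : G'.edgeSet.ncard = (G.edgeSet.ncard - 1) + 3 := by
    rw [hE, Set.ncard_union_eq hdisj (Set.toFinite _) (Set.toFinite _),
      Set.ncard_image_of_injective _ hminj, Set.ncard_diff_singleton_of_mem hxyE,
      hc3]
  have hE1 : 1 ≤ G.edgeSet.ncard := by
    have : (2 : ℤ) * n - 1 = G.edgeSet.ncard := hcard.symm
    have hn0 : 1 ≤ n := by
      by_contra h
      push_neg at h
      interval_cases n <;> omega
    omega
  have key : ∀ F' ⊆ G'.edgeSet, F' ≠ G'.edgeSet → F'.Nonempty →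
      (F'.ncard : ℤ) ≤ 2 * (edgeVerts F').ncard - 2 := by
    intro F' hsub hne hnon
    set F₀ : Set (Sym2 V) := m ⁻¹' F' with hF₀
    set g : V → Sym2 (Option V) := fun u => s((none : Option V), some u) with hg
    set S : Set V := {u | g u ∈ F'} with hSdef
    have hgx : g x = e₁ := he₁.symm
    have hgy : g y = e₂ := he₂.symm
    have hgz : g z = e₃ := he₃.symm
    have hnoneg : ∀ u : V, (none : Option V) ∈ g u := fun u => Sym2.mem_mk_left _ _
    have hgeq : ∀ u w : V, g u = s((none : Option V), some w) → u = w := by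
      intro u w h
      have h' : s((none : Option V), some u) = s((none : Option V), some w) := h
      rw [Sym2.eq_iff] at h'
      rcases h' with ⟨-, h'⟩ | ⟨h', -⟩
      · exact Option.some_injective V h'
      · exact absurd h' (by simp)
    have hginj : Function.Injective g := fun u v h => hgeq u v h
    have hF₀sub : F₀ ⊆ G.edgeSet \ {s(x,y)} := by
      intro e₀ he₀
      have h1 : m e₀ ∈ G'.edgeSet := hsub he₀
      rw [hE] at h1
      rcases h1 with ⟨f₀, hf₀, heq⟩ | h1
      · exact (hminj heq) ▸ hf₀
      · exfalso
        rcases h1 with h | h | h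
        · exact hnonem e₀ (by rw [h]; exact hnone1)
        · exact hnonem e₀ (by rw [h]; exact hnone2)
        · exact hnonem e₀ (by rw [h]; exact hnone3)
    have hSsub : S ⊆ ({x, y, z} : Set V) := by
      intro u hu
      have h1 : g u ∈ G'.edgeSet := hsub hu
      rw [hE] at h1
      rcases h1 with ⟨f₀, -, heq⟩ | h1
      · exact absurd (by rw [heq]; exact hnoneg u) (hnonem f₀)
      · rcases h1 with h | h | h
        · exact Or.inl (hgeq u x (by rw [h, he₁]))
        · exact Or.inr (Or.inl (hgeq u y (by rw [h, he₂])))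
        · exact Or.inr (Or.inr (hgeq u z (by rw [h, he₃])))
    have hdecomp : F' = m '' F₀ ∪ g '' S := by
      apply Set.Subset.antisymm
      · intro e he
        have h1 := hsub he
        rw [hE] at h1
        rcases h1 with ⟨e₀, -, heq⟩ | h1
        · exact Or.inl ⟨e₀, by rw [hF₀, Set.mem_preimage, heq]; exact he, heq⟩
        · rcases h1 with h | h | h
          · exact Or.inr ⟨x, show g x ∈ F' by rw [hgx, ← h]; exact he, by rw [hgx, ← h]⟩
          · exact Or.inr ⟨y, show g y ∈ F' by rw [hgy, ← h]; exact he, by rw [hgy, ← h]⟩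
          · exact Or.inr ⟨z, show g z ∈ F' by rw [hgz, ← h]; exact he, by rw [hgz, ← h]⟩
      · rintro e (⟨e₀, he₀, rfl⟩ | ⟨u, hu, rfl⟩)
        · exact he₀
        · exact hu
    have hdisj2 : Disjoint (m '' F₀) (g '' S) := by
      rw [Set.disjoint_right]
      rintro e ⟨u, -, heq⟩ ⟨e₀, -, heq'⟩
      exact hnonem e₀ (by rw [heq', ← heq]; exact hnoneg u)
    have hcount : F'.ncard = F₀.ncard + S.ncard := by
      rw [hdecomp, Set.ncard_union_eq hdisj2 (Set.toFinite _) (Set.toFinite _),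
        Set.ncard_image_of_injective _ hminj, Set.ncard_image_of_injective _ hginj]
    have hEV : edgeVerts F' = some '' edgeVerts F₀ ∪ edgeVerts (g '' S) := by
      rw [hdecomp, edgeVerts_union, hm, edgeVerts_map]
    rcases Set.eq_empty_or_nonempty S with hS | hSne
    · -- Case A : no new edges
      have hF'img : F' = m '' F₀ := by rw [hdecomp, hS, Set.image_empty, Set.union_empty]
      have hF₀ne : F₀.Nonempty := by
        obtain ⟨e, he⟩ := hnon
        rw [hF'img] at he
        obtain ⟨e₀, he₀, -⟩ := he
        exact ⟨e₀, he₀⟩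
      have hss : F₀ ⊂ G.edgeSet :=
        lt_of_le_of_lt hF₀sub (Set.sdiff_singleton_ssubset.mpr hxyE)
      obtain ⟨hle, -⟩ := hsparse F₀ hss F₀ subset_rfl hF₀ne
      have h1 : F'.ncard = F₀.ncard := by rw [hF'img, Set.ncard_image_of_injective _ hminj]
      have h2 : (edgeVerts F').ncard = (edgeVerts F₀).ncard := by
        rw [hF'img, hm, edgeVerts_map, Set.ncard_image_of_injective _ (Option.some_injective V)]
      rw [h1, h2]
      exact hle
    · -- Case B : at least one new edge
      have hEVS : edgeVerts (g '' S) = insert (none : Option V) (some '' S) := by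
        ext v
        simp only [edgeVerts, Set.mem_setOf_eq, Set.mem_insert_iff, Set.mem_image]
        constructor
        · rintro ⟨e, ⟨u, hu, rfl⟩, hv⟩
          have hv' : v ∈ s((none : Option V), some u) := hv
          rw [Sym2.mem_iff] at hv'
          rcases hv' with rfl | rfl
          · exact Or.inl rfl
          · exact Or.inr ⟨u, hu, rfl⟩
        · rintro (rfl | ⟨u, hu, rfl⟩)
          · obtain ⟨u, hu⟩ := hSne
            exact ⟨g u, ⟨u, hu, rfl⟩, hnoneg u⟩
          · exact ⟨g u, ⟨u, hu, rfl⟩, Sym2.mem_mk_right _ _⟩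
      have hEV2 : edgeVerts F' = insert (none : Option V) (some '' (edgeVerts F₀ ∪ S)) := by
        rw [hEV, hEVS, Set.image_union]
        ext v
        simp only [Set.mem_union, Set.mem_insert_iff]
        tauto
      have hvc : (edgeVerts F').ncard = (edgeVerts F₀ ∪ S).ncard + 1 := by
        rw [hEV2, Set.ncard_insert_of_notMem (by simp) (Set.toFinite _),
          Set.ncard_image_of_injective _ (Option.some_injective V)]
      have hxyz3 : ({x, y, z} : Set V).ncard ≤ 3 := by
        apply le_trans (Set.ncard_insert_le _ _)
        have := Set.ncard_insert_le y ({z} : Set V)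
        simp only [Set.ncard_singleton] at this
        omega
      have hS3 : S.ncard ≤ 3 :=
        le_trans (Set.ncard_le_ncard hSsub (Set.toFinite _)) hxyz3
      rcases Set.eq_empty_or_nonempty F₀ with hF₀e | hF₀ne
      · have h1 : F'.ncard = S.ncard := by rw [hcount, hF₀e, Set.ncard_empty, zero_add]
        have h2 : edgeVerts F₀ ∪ S = S := by rw [hF₀e, edgeVerts_empty, Set.empty_union]
        rw [h1, hvc, h2]
        push_cast
        omega
      · have hss : F₀ ⊂ G.edgeSet :=
          lt_of_le_of_lt hF₀sub (Set.sdiff_singleton_ssubset.mpr hxyE)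
        obtain ⟨hbase, -⟩ := hsparse F₀ hss F₀ subset_rfl hF₀ne
        by_cases hS2 : S.ncard ≤ 2
        · have hmono : (edgeVerts F₀).ncard ≤ (edgeVerts F₀ ∪ S).ncard :=
            Set.ncard_le_ncard Set.subset_union_left (Set.toFinite _)
          rw [hcount, hvc]
          push_cast at hbase ⊢
          omega
        · push_neg at hS2
          have hSeq : S = {x, y, z} :=
            Set.eq_of_subset_of_ncard_le hSsub (by omega) (Set.toFinite _)
          have hSc : S.ncard = 3 := by
            rw [hSeq]
            rw [Set.ncard_insert_of_notMem (by simp [hxny, hzx.symm]) (Set.toFinite _),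
              Set.ncard_insert_of_notMem (by simp [hzy.symm]) (Set.toFinite _),
              Set.ncard_singleton]
          by_cases hxyzV : ({x, y, z} : Set V) ⊆ edgeVerts F₀
          · -- hard case : x, y, z all covered by old edges
            have hUS : edgeVerts F₀ ∪ S = edgeVerts F₀ := by
              rw [hSeq]
              exact Set.union_eq_self_of_subset_right hxyzV
            have hssF' : F' ⊂ G'.edgeSet :=
              ⟨hsub, fun h => hne (Set.Subset.antisymm hsub h)⟩
            obtain ⟨e, heE, heF⟩ := Set.exists_of_ssubset hssF'
            rw [hE] at heE
            rcases heE with ⟨e₀, ⟨he₀E, he₀ne⟩, heq⟩ | hnew'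
            · -- missing edge is an old edge
              have he₀F₀ : e₀ ∉ F₀ := fun h => heF (heq ▸ h)
              have hxyF₀ : s(x,y) ∉ F₀ := fun h => (hF₀sub h).2 rfl
              have hprop : insert s(x,y) F₀ ⊂ G.edgeSet := by
                constructor
                · rw [Set.insert_subset_iff]
                  exact ⟨hxyE, fun f hf => (hF₀sub hf).1⟩
                · intro hsup
                  rcases hsup he₀E with h | h
                  · exact he₀ne h
                  · exact he₀F₀ h
              obtain ⟨hb2, -⟩ := hsparse _ hprop _ subset_rfl ⟨s(x,y), Set.mem_insert _ _⟩
              have hic : (insert s(x,y) F₀).ncard = F₀.ncard + 1 :=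
                Set.ncard_insert_of_notMem hxyF₀ (Set.toFinite _)
              have hiev : edgeVerts (insert s(x,y) F₀) = edgeVerts F₀ := by
                rw [show insert s(x,y) F₀ = {s(x,y)} ∪ F₀ from rfl, edgeVerts_union,
                  edgeVerts_pair]
                apply Set.union_eq_self_of_subset_left
                rintro v (rfl | rfl)
                · exact hxyzV (Or.inl rfl)
                · exact hxyzV (Or.inr (Or.inl rfl))
              rw [hic, hiev] at hb2
              rw [hcount, hvc, hUS, hSc]
              push_cast at hb2 ⊢
              omega
            · -- missing edge cannot be a new edge
              exfalso
              have hxS : x ∈ S := by rw [hSeq]; exact Or.inl rfl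
              have hyS : y ∈ S := by rw [hSeq]; exact Or.inr (Or.inl rfl)
              have hzS : z ∈ S := by rw [hSeq]; exact Or.inr (Or.inr rfl)
              rcases hnew' with h | h | h
              · exact heF (by rw [h, ← hgx]; exact hxS)
              · exact heF (by rw [h, ← hgy]; exact hyS)
              · exact heF (by rw [h, ← hgz]; exact hzS)
          · -- some of x, y, z is uncovered
            have hlt : edgeVerts F₀ ⊂ edgeVerts F₀ ∪ S := by
              rw [hSeq]
              refine ⟨Set.subset_union_left, fun hsup => hxyzV ?_⟩
              intro v hv
              exact hsup (Or.inr hv)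
            have hlt2 : (edgeVerts F₀).ncard < (edgeVerts F₀ ∪ S).ncard :=
              Set.ncard_lt_ncard hlt (Set.toFinite _)
            rw [hcount, hvc, hSc]
            push_cast at hbase ⊢
            omega
  refine ⟨?_, ?_, ?_⟩
  · -- edge count
    rw [hcE', Fintype.card_option]
    push_cast
    omega
  · -- all proper subsets are sparse
    intro F hF F' hF'sub hF'ne
    have hF'E : F' ⊆ G'.edgeSet := hF'sub.trans hF.subset
    have hF'neq : F' ≠ G'.edgeSet := by
      intro h
      rw [h] at hF'sub
      exact hF.not_subset hF'sub
    refine ⟨key F' hF'E hF'neq hF'ne, fun h2 => ?_⟩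
    have h3 : 3 ≤ (edgeVerts F').ncard :=
      three_le (fun e he => G'.not_isDiag_of_mem_edgeSet (hF'E he)) h2
    rw [h2]
    push_cast
    omega
  · -- the whole edge set is not sparse
    intro h
    have hne : G'.edgeSet.Nonempty := ⟨e₁, by rw [hE]; exact Or.inr (Or.inl rfl)⟩
    obtain ⟨hle, -⟩ := h G'.edgeSet subset_rfl hne
    have hv : (edgeVerts G'.edgeSet).ncard ≤ n + 1 := by
      have := Set.ncard_le_ncard (Set.subset_univ (edgeVerts G'.edgeSet)) (Set.toFinite _)
      rwa [Set.ncard_univ, Nat.card_eq_fintype_card, Fintype.card_option] at this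
    rw [hcE'] at hle
    push_cast at hle
    omega
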